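/- Let d ≥ 1, let u₁, u₂ : ℝ^d → (0,∞) be continuous, strictly positive, integrable functions with ∫u₁ = ∫u₂ = 1, let α = (α₁,…,α_d) with each α_j ∈ (0,1), let K, δ, t > 0, let ξ ∈ ℝ^d, and fix j ∈ {1,…,d}. Assume that |Q_α^j(u₁) − ξ_j| ≤ K√t and |Q_α^j(u₂) − ξ_j| ≤ K√t, and that u₁(x) ≥ δ t^{−d/2} for every x with |x_j − ξ_j| ≤ K√t and max_{k≠j} |x_k − ξ_k| ≤ 2K√t. Then |Q_α^j(u₁) − Q_α^j(u₂)| ≤ √t ‖u₁ − u₂‖_L / (δ (4K)^{d−1}). -/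

import Mathlib

open MeasureTheory Real Set

/-- The `√t`-improved Lipschitz estimate for the `j`-th coordinate of the
quantile vector in `L¹`-distance, under the localization properties satisfied by heat kernels
started from the Dirac measure at `ξ`: if both `j`-th quantile coordinates lie within `K√t`
of `ξ_j` and `u₁ ≥ δ t^{-d/2}` on the slab `{|x_j - ξ_j| ≤ K√t, |x_k - ξ_k| ≤ 2K√t (k ≠ j)}`,
then `|Q_α^j(u₁) - Q_α^j(u₂)| ≤ √t ‖u₁ - u₂‖_{L¹} / (δ (4K)^{d-1})`. -/
theorem quantile_lipschitz_in_L1_dirac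
    (d : ℕ) (hd : 1 ≤ d)
    (u₁ u₂ : EuclideanSpace ℝ (Fin d) → ℝ)
    (h₁c : Continuous u₁) (h₂c : Continuous u₂)
    (h₁p : ∀ x, 0 < u₁ x) (h₂p : ∀ x, 0 < u₂ x)
    (h₁i : Integrable u₁) (h₂i : Integrable u₂)
    (h₁m : ∫ x, u₁ x = 1) (h₂m : ∫ x, u₂ x = 1)
    (α : Fin d → ℝ) (hα : ∀ j, α j ∈ Ioo (0 : ℝ) 1)
    (K δ t : ℝ) (hK : 0 < K) (hδ : 0 < δ) (ht : 0 < t)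
    (ξ : EuclideanSpace ℝ (Fin d))
    (j : Fin d)
    (q₁ q₂ : Fin d → ℝ)
    (hq₁ : ∀ i, ∫ x in {x : EuclideanSpace ℝ (Fin d) | x i ≤ q₁ i}, u₁ x = α i)
    (hq₂ : ∀ i, ∫ x in {x : EuclideanSpace ℝ (Fin d) | x i ≤ q₂ i}, u₂ x = α i)
    (hq₁K : |q₁ j - ξ j| ≤ K * Real.sqrt t) (hq₂K : |q₂ j - ξ j| ≤ K * Real.sqrt t)
    (hlow : ∀ x : EuclideanSpace ℝ (Fin d),
      |x j - ξ j| ≤ K * Real.sqrt t → (∀ k, k ≠ j → |x k - ξ k| ≤ 2 * K * Real.sqrt t) →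
      δ * t ^ (-(d : ℝ) / 2) ≤ u₁ x) :
    |q₁ j - q₂ j| ≤ Real.sqrt t * (∫ x, |u₁ x - u₂ x|) / (δ * (4 * K) ^ (d - 1)) := by
  set st := Real.sqrt t with hst_def
  have hst : 0 < st := Real.sqrt_pos.2 ht
  set a := min (q₁ j) (q₂ j) with ha_def
  set b := max (q₁ j) (q₂ j) with hb_def
  have hab : a ≤ b := min_le_max
  set L : ℝ := ∫ x, |u₁ x - u₂ x| with hL_def
  have hLi : Integrable (fun x => |u₁ x - u₂ x|) := (h₁i.sub h₂i).abs
  -- bounds on a, b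
  have hq1 := abs_le.1 hq₁K
  have hq2 := abs_le.1 hq₂K
  have haK : ξ j - K * st ≤ a := le_min (by linarith [hq1.1]) (by linarith [hq2.1])
  have hbK : b ≤ ξ j + K * st := max_le (by linarith [hq1.2]) (by linarith [hq2.2])
  -- the slab S
  have hmj : Measurable fun x : EuclideanSpace ℝ (Fin d) => x j :=
    (measurable_pi_apply j).comp (MeasurableEquiv.toLp 2 (Fin d → ℝ)).symm.measurable
  have hmeas_le : ∀ c : ℝ, MeasurableSet {x : EuclideanSpace ℝ (Fin d) | x j ≤ c} :=
    fun c => measurableSet_le hmj measurable_const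
  set S : Set (EuclideanSpace ℝ (Fin d)) :=
    {x | x j ≤ b} \ {x | x j ≤ a} with hS_def
  -- upper bound for the difference of set integrals
  have habs : ∀ s : Set (EuclideanSpace ℝ (Fin d)),
      (∫ x in s, u₁ x) - ∫ x in s, u₂ x ≤ L ∧ (∫ x in s, u₂ x) - ∫ x in s, u₁ x ≤ L := by
    intro s
    constructor
    · calc (∫ x in s, u₁ x) - ∫ x in s, u₂ x = ∫ x in s, (u₁ x - u₂ x) :=
            (integral_sub h₁i.integrableOn h₂i.integrableOn).symm
        _ ≤ ∫ x in s, |u₁ x - u₂ x| :=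
            setIntegral_mono (h₁i.integrableOn.sub h₂i.integrableOn) hLi.integrableOn
              fun x => le_abs_self _
        _ ≤ L := setIntegral_le_integral hLi (Filter.Eventually.of_forall fun x => abs_nonneg _)
    · calc (∫ x in s, u₂ x) - ∫ x in s, u₁ x = ∫ x in s, (u₂ x - u₁ x) :=
            (integral_sub h₂i.integrableOn h₁i.integrableOn).symm
        _ ≤ ∫ x in s, |u₁ x - u₂ x| :=
            setIntegral_mono (h₂i.integrableOn.sub h₁i.integrableOn) hLi.integrableOn
              fun x => (abs_sub_comm (u₁ x) (u₂ x) ▸ le_abs_self _)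
        _ ≤ L := setIntegral_le_integral hLi (Filter.Eventually.of_forall fun x => abs_nonneg _)
  -- ∫_S u₁ ≤ L
  have hSdiff : ∫ x in S, u₁ x = (∫ x in {x | x j ≤ b}, u₁ x) - ∫ x in {x | x j ≤ a}, u₁ x :=
    integral_diff (hmeas_le a) h₁i.integrableOn (fun x hx => le_trans hx hab)
  have key1 : ∫ x in S, u₁ x ≤ L := by
    rcases le_total (q₁ j) (q₂ j) with h | h
    · have haq : a = q₁ j := min_eq_left h
      have hbq : b = q₂ j := max_eq_right h
      rw [hSdiff, haq, hbq, hq₁ j, ← hq₂ j]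
      exact (habs _).1
    · have haq : a = q₂ j := min_eq_right h
      have hbq : b = q₁ j := max_eq_left h
      rw [hSdiff, haq, hbq, hq₁ j, ← hq₂ j]
      exact (habs _).2
  -- the box B
  set r : ℝ := 2 * K * st with hr_def
  have hr : 0 < r := by positivity
  set I : Fin d → Set ℝ := fun k => if k = j then Ioc a b else Icc (ξ k - r) (ξ k + r)
    with hI_def
  set B : Set (EuclideanSpace ℝ (Fin d)) := {x | ∀ k, x k ∈ I k} with hB_def
  have hImeas : ∀ k, MeasurableSet (I k) := by
    intro k
    by_cases hk : k = j <;> simp [hI_def, hk, measurableSet_Ioc, measurableSet_Icc]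
  have hBpre : B = ((MeasurableEquiv.toLp 2 (Fin d → ℝ)).symm) ⁻¹' (univ.pi I) := by
    ext x
    simp only [hB_def, Set.mem_preimage, Set.mem_univ_pi, Set.mem_setOf_eq]
    rfl
  have hpimeas : MeasurableSet (univ.pi I) := MeasurableSet.univ_pi hImeas
  have hBmeas : MeasurableSet B := by
    rw [hBpre]; exact hpimeas.preimage (MeasurableEquiv.toLp 2 (Fin d → ℝ)).symm.measurable
  have hvolpi : volume (univ.pi I) =
      ENNReal.ofReal (b - a) * ENNReal.ofReal (2 * r) ^ (d - 1) := by
    rw [volume_pi_pi]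
    rw [← Finset.mul_prod_erase Finset.univ _ (Finset.mem_univ j)]
    have h1 : volume (I j) = ENNReal.ofReal (b - a) := by
      simp [hI_def, Real.volume_Ioc]
    have h2 : ∀ k ∈ Finset.univ.erase j, volume (I k) = ENNReal.ofReal (2 * r) := by
      intro k hk
      have hk' : k ≠ j := Finset.ne_of_mem_erase hk
      have : ξ k + r - (ξ k - r) = 2 * r := by ring
      simp [hI_def, hk', Real.volume_Icc, this]
    rw [h1, Finset.prod_congr rfl h2, Finset.prod_const,
      Finset.card_erase_of_mem (Finset.mem_univ j), Finset.card_univ, Fintype.card_fin]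
  have hvolB : volume B = ENNReal.ofReal (b - a) * ENNReal.ofReal (2 * r) ^ (d - 1) := by
    rw [hBpre,
      (EuclideanSpace.volume_preserving_symm_measurableEquiv_toLp (Fin d)).measure_preimage
        hpimeas.nullMeasurableSet, hvolpi]
  have hBfin : volume B ≠ ⊤ := by
    rw [hvolB]
    exact ENNReal.mul_ne_top ENNReal.ofReal_ne_top (ENNReal.pow_ne_top ENNReal.ofReal_ne_top)
  have hvolBtoReal : (volume B).toReal = (b - a) * (2 * r) ^ (d - 1) := by
    rw [hvolB, ENNReal.toReal_mul, ENNReal.toReal_pow, ENNReal.toReal_ofReal (by linarith),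
      ENNReal.toReal_ofReal (by linarith)]
  -- B ⊆ S
  have hBsub : B ⊆ S := by
    intro x hx
    have hxj := hx j
    simp only [hI_def, if_pos rfl, Set.mem_Ioc] at hxj
    exact ⟨hxj.2, fun h => absurd (lt_of_lt_of_le hxj.1 h) (lt_irrefl _)⟩
  -- lower bound on B
  set c₀ : ℝ := δ * t ^ (-(d : ℝ) / 2) with hc₀_def
  have hlowB : ∀ x ∈ B, c₀ ≤ u₁ x := by
    intro x hx
    have hxj := hx j
    simp only [hI_def, if_pos rfl, Set.mem_Ioc] at hxj
    refine hlow x (abs_le.2 ⟨by linarith, by linarith⟩) ?_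
    intro k hk
    have hxk := hx k
    simp only [hI_def, if_neg hk, Set.mem_Icc] at hxk
    rw [hr_def] at hxk
    exact abs_le.2 ⟨by linarith [hxk.1], by linarith [hxk.2]⟩
  have key2 : c₀ * (volume B).toReal ≤ ∫ x in B, u₁ x :=
    by have := setIntegral_ge_of_const_le_real hBmeas hBfin hlowB h₁i.integrableOn; exact this
  have key3 : ∫ x in B, u₁ x ≤ ∫ x in S, u₁ x :=
    setIntegral_mono_set h₁i.integrableOn
      (Filter.Eventually.of_forall fun x => (h₁p x).le)
      (Filter.Eventually.of_forall hBsub)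
  -- combine
  have main : c₀ * ((b - a) * (2 * r) ^ (d - 1)) ≤ L := by
    rw [← hvolBtoReal]; exact le_trans key2 (le_trans key3 key1)
  -- arithmetic: c₀ * (2r)^(d-1) = δ * (4K)^(d-1) * st⁻¹
  have hpow : t ^ (-(d : ℝ) / 2) * st ^ (d - 1) = st⁻¹ := by
    have hsd : st ^ (d - 1) = t ^ (((d : ℝ) - 1) / 2) := by
      rw [hst_def, Real.sqrt_eq_rpow, ← Real.rpow_natCast (t ^ (1/2 : ℝ)) (d-1),
        ← Real.rpow_mul ht.le]
      congr 1
      rw [Nat.cast_sub hd]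
      push_cast
      ring
    rw [hsd, ← Real.rpow_add ht]
    have : -(d : ℝ) / 2 + ((d : ℝ) - 1) / 2 = -(1 / 2) := by ring
    rw [this, Real.rpow_neg ht.le, hst_def, Real.sqrt_eq_rpow]
  have h2r : (2 * r) ^ (d - 1) = (4 * K) ^ (d - 1) * st ^ (d - 1) := by
    rw [hr_def]
    rw [show 2 * (2 * K * st) = (4 * K) * st by ring, mul_pow]
  set D : ℝ := δ * (4 * K) ^ (d - 1) with hD_def
  have hD : 0 < D := by positivity
  have main2 : D * (b - a) * st⁻¹ ≤ L := by
    calc D * (b - a) * st⁻¹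
        = c₀ * ((b - a) * (2 * r) ^ (d - 1)) := by
          rw [hc₀_def, hD_def, h2r, ← hpow]; ring
      _ ≤ L := main
  have hfin : b - a ≤ st * L / D := by
    have h1 : D * (b - a) ≤ L * st := by
      have h := mul_le_mul_of_nonneg_right main2 hst.le
      rwa [mul_assoc (D * (b - a)), inv_mul_cancel₀ hst.ne', mul_one] at h
    rw [le_div_iff₀ hD]
    calc (b - a) * D = D * (b - a) := by ring
      _ ≤ L * st := h1
      _ = st * L := by ring
  have habsq : |q₁ j - q₂ j| = b - a := by
    rw [ha_def, hb_def, max_sub_min_eq_abs, abs_sub_comm]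
  rw [habsq]
  exact hfin
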